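/- If a 2D GFT graph is type 1 then it is one-particle irreducible: the existence of a bridge (cut-edge) L would force the face broken by L to contain two distinct 1D descendents of the same 2D vertex, violating the uniqueness condition. -/
import Mathlib


/-- A ribbon (fat) graph, encoded by its set of darts `D` together with the vertex
rotation permutation `σ` and the fixed-point-free edge involution `α`.  Vertices are the
orbits of `σ`, edges the orbits of `α`, and faces the orbits of `φ = σ ∘ α`. -/
structure Ribbon where
  D : Type
  [fin : Fintype D]
  [deq : DecidableEq D]
  σ : Equiv.Perm D
  α : Equiv.Perm D
  αfix : ∀ d, α d ≠ d
  αinv : ∀ d, α (α d) = d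

namespace Ribbon

variable (G : Ribbon)

instance : Fintype G.D := G.fin
instance : DecidableEq G.D := G.deq

/-- The face permutation of the ribbon graph. -/
def φ : Equiv.Perm G.D := G.σ * G.α

/-- Two darts lie on the same vertex. -/
def sameVertex : G.D → G.D → Prop := G.σ.SameCycle

/-- Two darts lie on the same face. -/
def sameFace : G.D → G.D → Prop := G.φ.SameCycle

/-- Two darts belong to the same edge. -/
def sameEdge (d e : G.D) : Prop := e = d ∨ e = G.α d

def vSetoid : Setoid G.D :=
  ⟨G.sameVertex, ⟨fun _ => Equiv.Perm.SameCycle.refl _ _,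
    Equiv.Perm.SameCycle.symm, Equiv.Perm.SameCycle.trans⟩⟩

def fSetoid : Setoid G.D :=
  ⟨G.sameFace, ⟨fun _ => Equiv.Perm.SameCycle.refl _ _,
    Equiv.Perm.SameCycle.symm, Equiv.Perm.SameCycle.trans⟩⟩

def eSetoid : Setoid G.D where
  r := G.sameEdge
  iseqv := by
    constructor
    · intro x; exact Or.inl rfl
    · intro x y h
      rcases h with h | h
      · exact Or.inl h.symm
      · subst h; exact Or.inr (G.αinv x).symm
    · intro x y z h1 h2
      rcases h1 with h1 | h1 <;> rcases h2 with h2 | h2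
      · subst h1; exact Or.inl h2
      · subst h1; exact Or.inr h2
      · subst h1; subst h2; exact Or.inr rfl
      · subst h1; subst h2; rw [G.αinv]; exact Or.inl rfl

/-- Number of vertices. -/
noncomputable def nV : ℕ := Nat.card (Quotient G.vSetoid)
/-- Number of edges. -/
noncomputable def nE : ℕ := Nat.card (Quotient G.eSetoid)
/-- Number of faces. -/
noncomputable def nF : ℕ := Nat.card (Quotient G.fSetoid)

/-- Euler characteristic `V - E + F` of the underlying closed orientable surface. -/
noncomputable def eulerChar : ℤ := (G.nV : ℤ) - G.nE + G.nF

/-- All vertices are trivalent. -/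
def Trivalent : Prop := ∀ d, G.σ d ≠ d ∧ G.σ (G.σ d) ≠ d ∧ G.σ (G.σ (G.σ d)) = d

/-- The ribbon graph is connected. -/
def Connected : Prop :=
  ∀ d e : G.D, Relation.ReflTransGen (fun a b => G.σ a = b ∨ G.α a = b) d e

/-- Planarity: genus zero, i.e. Euler characteristic `2`. -/
noncomputable def Planar : Prop := G.eulerChar = 2

/-- One-particle irreducibility (no bridges): any two darts can be joined by a path
avoiding any prescribed edge. -/
def OnePI : Prop :=
  ∀ d₀ a b : G.D,
    Relation.ReflTransGen (fun x y => G.σ x = y ∨ (G.α x = y ∧ ¬ G.sameEdge d₀ x)) a b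

/-- The faces of the graph. -/
def Face := Quotient G.fSetoid

noncomputable instance : Fintype G.Face := by
  classical exact Quotient.fintype G.fSetoid

/-- The face on which the dart `d` lies. -/
def faceOf (d : G.D) : G.Face := Quotient.mk G.fSetoid d

/-- The edge of the dart `d` borders the face `f` (with one of its two sides). -/
def borders (d : G.D) (f : G.Face) : Prop := G.faceOf d = f ∨ G.faceOf (G.α d) = f

/-- First type 1 condition: every 2D vertex/edge of the ancestor of a face projects to a
unique 1D vertex/edge of that face.  Equivalently: the faces around every vertex are
pairwise distinct, and each edge appears at most once on any given face boundary. -/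
def TypeOneI : Prop :=
  (∀ d e, G.sameVertex d e → G.sameFace d e → d = e) ∧ ∀ d, ¬ G.sameFace d (G.α d)

/-- The 1D intersection of (the cycle of) a face `f` with the union of the ancestor
graphs of the faces in `J`: the darts of `f` whose edge borders some face of `J`. -/
def interSet (f : G.Face) (J : Set G.Face) : Set G.D :=
  {x | G.faceOf x = f ∧ ∃ j ∈ J, G.borders x j}

/-- A subset of a face cycle is connected (an arc): any two of its members are joined by
steps of the face permutation staying inside the subset. -/
def ArcConnected (S : Set G.D) : Prop :=
  ∀ x ∈ S, ∀ y ∈ S,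
    Relation.ReflTransGen (fun a b => (G.φ a = b ∨ G.φ b = a) ∧ a ∈ S ∧ b ∈ S) x y

/-- Second type 1 condition: for every face `f₁` there is a total ordering
`f₁ < f₂ < … < f_n` of all faces such that the intersection of each `f_i` with the union
of the ancestors of the previous faces is nonempty and connected, and `f_i` is not
contained in that union (except possibly the last face). -/
def TypeOneII : Prop :=
  ∀ f₁ : G.Face, ∃ (n : ℕ) (ord : Fin n ≃ G.Face),
    (∀ h : 0 < n, ord ⟨0, h⟩ = f₁) ∧
    ∀ i : Fin n, 0 < i.1 →
      (G.interSet (ord i) {g | ∃ j, j < i ∧ ord j = g}).Nonempty ∧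
      G.ArcConnected (G.interSet (ord i) {g | ∃ j, j < i ∧ ord j = g}) ∧
      (i.1 + 1 < n →
        ∃ x, G.faceOf x = ord i ∧ x ∉ G.interSet (ord i) {g | ∃ j, j < i ∧ ord j = g})

/-- A 2D GFT graph is of type 1. -/
def TypeOne : Prop := G.TypeOneI ∧ G.TypeOneII

end Ribbon

namespace RibbonAux

open Ribbon

variable (G : Ribbon)

/-- The step relation avoiding the edge of `d₀`. -/
def R (d₀ : G.D) (x y : G.D) : Prop :=
  G.σ x = y ∨ (G.α x = y ∧ ¬ G.sameEdge d₀ x)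

lemma reach_sigma_pow (d₀ x : G.D) (m : ℕ) :
    Relation.ReflTransGen (R G d₀) x ((G.σ ^ m) x) := by
  induction m with
  | zero => simp [Relation.ReflTransGen.refl]
  | succ n ih =>
      refine ih.tail (Or.inl ?_)
      have : G.σ ^ (n + 1) = G.σ * G.σ ^ n := by
        rw [pow_succ']
      rw [this]
      rfl

lemma reach_sigma_rev (d₀ x : G.D) :
    Relation.ReflTransGen (R G d₀) (G.σ x) x := by
  have hn : 0 < orderOf G.σ := orderOf_pos G.σ
  have h := reach_sigma_pow G d₀ (G.σ x) (orderOf G.σ - 1)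
  have : ((G.σ ^ (orderOf G.σ - 1)) (G.σ x)) = x := by
    have : G.σ ^ (orderOf G.σ - 1) * G.σ = G.σ ^ orderOf G.σ := by
      rw [← pow_succ, Nat.sub_add_cancel hn]
    have h2 : (G.σ ^ (orderOf G.σ - 1) * G.σ) x = (G.σ ^ orderOf G.σ) x := by rw [this]
    simpa [pow_orderOf_eq_one] using h2
  rwa [this] at h

lemma reach_phi (d₀ x : G.D) (h1 : x ≠ d₀) (h2 : x ≠ G.α d₀) :
    Relation.ReflTransGen (R G d₀) x (G.φ x) := by
  have hstep : R G d₀ x (G.α x) := by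
    refine Or.inr ⟨rfl, ?_⟩
    intro h
    rcases h with h | h
    · exact h1 h
    · exact h2 h
  have : Relation.ReflTransGen (R G d₀) (G.α x) (G.σ (G.α x)) :=
    Relation.ReflTransGen.single (Or.inl rfl)
  have hφ : G.φ x = G.σ (G.α x) := rfl
  rw [hφ]
  exact (Relation.ReflTransGen.single hstep).trans this

lemma key (d₀ c : G.D)
    (hedge : ∀ x, G.sameEdge d₀ x ↔ G.sameEdge c x)
    (hface : ¬ G.sameFace c (G.α c)) :
    Relation.ReflTransGen (R G d₀) (G.α c) c := by
  -- first: from φ c, walk along the face back to c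
  have main : ∀ m : ℕ, Relation.ReflTransGen (R G d₀) (G.φ c) c ∨
      Relation.ReflTransGen (R G d₀) (G.φ c) ((G.φ ^ (m + 1)) c) := by
    intro m
    induction m with
    | zero => right; simpa using Relation.ReflTransGen.refl
    | succ n ih =>
        rcases ih with h | h
        · exact Or.inl h
        · set y := (G.φ ^ (n + 1)) c with hy
          by_cases hyc : y = c
          · left; rwa [hyc] at h
          · right
            have hyα : y ≠ G.α c := by
              intro hcontra
              apply hface
              exact ⟨(n + 1 : ℕ), by rw [zpow_natCast]; rw [← hy, hcontra]⟩
            have hyd : y ≠ d₀ ∧ y ≠ G.α d₀ := by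
              have : ¬ G.sameEdge d₀ y := by
                rw [hedge]
                intro hh
                rcases hh with hh | hh
                · exact hyc hh
                · exact hyα hh
              constructor
              · intro hh; exact this (Or.inl hh)
              · intro hh; exact this (Or.inr hh)
            have hstep := reach_phi G d₀ y hyd.1 hyd.2
            have : (G.φ ^ (n + 1 + 1)) c = G.φ y := by
              rw [hy, ← Equiv.Perm.mul_apply, ← pow_succ']
            rw [this]
            exact h.trans hstep
  have hend : Relation.ReflTransGen (R G d₀) (G.φ c) c := by
    rcases main (orderOf G.φ - 1) with h | h
    · exact h
    · have hn : 0 < orderOf G.φ := orderOf_pos G.φ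
      rw [Nat.sub_add_cancel hn] at h
      simpa [pow_orderOf_eq_one] using h
  have hσ : Relation.ReflTransGen (R G d₀) (G.α c) (G.σ (G.α c)) :=
    Relation.ReflTransGen.single (Or.inl rfl)
  have hφ : G.φ c = G.σ (G.α c) := rfl
  exact hσ.trans (hφ ▸ hend)

lemma key₁ (d₀ : G.D) (hface : ∀ d, ¬ G.sameFace d (G.α d)) :
    Relation.ReflTransGen (R G d₀) (G.α d₀) d₀ :=
  key G d₀ d₀ (fun _ => Iff.rfl) (hface d₀)

lemma key₂ (d₀ : G.D) (hface : ∀ d, ¬ G.sameFace d (G.α d)) :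
    Relation.ReflTransGen (R G d₀) d₀ (G.α d₀) := by
  have h := key G d₀ (G.α d₀) ?_ ?_
  · rwa [G.αinv] at h
  · intro x
    unfold Ribbon.sameEdge
    rw [G.αinv]
    tauto
  · rw [G.αinv]
    intro h
    exact hface d₀ h.symm

end RibbonAux

/-- If a (connected, trivalent) 2D GFT graph is type 1 then it is
one-particle irreducible: a bridge (cut-edge) would force the face broken by it to contain
two distinct 1D descendents of the same 2D vertex, violating the uniqueness condition. -/
theorem twoD_type1_implies_onePI (G : Ribbon)
    (htri : G.Trivalent) (hconn : G.Connected) (h1 : G.TypeOne) :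
    G.OnePI := by
  intro d₀ a b
  have hface : ∀ d, ¬ G.sameFace d (G.α d) := h1.1.2
  have hc := hconn a b
  induction hc with
  | refl => exact Relation.ReflTransGen.refl
  | tail hxy hstep ih =>
      rename_i x y
      rcases hstep with h | h
      · exact ih.tail (Or.inl h)
      · by_cases he : G.sameEdge d₀ x
        · rcases he with he | he
          · subst he
            rw [← h]
            exact ih.trans (RibbonAux.key₂ G x hface)
          · subst he
            rw [← h, G.αinv]
            exact ih.trans (RibbonAux.key₁ G d₀ hface)
        · exact ih.tail (Or.inr ⟨h, he⟩)
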